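/- For every integer n ≥ 5 there exists a non-associative loop of order n in which every element has a unique two-sided inverse. -/

import Mathlib

/-- `m` is the operation of a NAFIL: a loop (two-sided identity, unique
solvability) in which every element has a unique two-sided inverse, and which
is non-associative. -/

def IsNAFILOp {M : Type} (m : M → M → M) : Prop :=
  ∃ e : M,
    (∀ a, m e a = a) ∧ (∀ a, m a e = a) ∧
    (∀ a b, ∃! x, m a x = b) ∧ (∀ a b, ∃! y, m y a = b) ∧
    (∀ a, ∃! y, m a y = e ∧ m y a = e) ∧
    ¬ (∀ a b c, m (m a b) c = m a (m b c))

theorem isNAFILOp_mk {M : Type} [Finite M] (m : M → M → M) (e : M)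
    (h1 : ∀ a, m e a = a) (h2 : ∀ a, m a e = a)
    (hrow : ∀ a, Function.Injective (m a))
    (hcol : ∀ b, Function.Injective (fun a => m a b))
    (ι : M → M) (hinv : ∀ a, m a (ι a) = e ∧ m (ι a) a = e)
    (hna : ¬ ∀ a b c, m (m a b) c = m a (m b c)) : IsNAFILOp m := by
  refine ⟨e, h1, h2, ?_, ?_, ?_, hna⟩
  · intro a b
    obtain ⟨x, hx⟩ := (Finite.injective_iff_surjective.mp (hrow a)) b
    exact ⟨x, hx, fun y hy => hrow a (hy.trans hx.symm)⟩
  · intro a b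
    obtain ⟨x, hx⟩ := (Finite.injective_iff_surjective.mp (hcol a)) b
    exact ⟨x, hx, fun y hy => hcol a (hy.trans hx.symm)⟩
  · intro a
    exact ⟨ι a, hinv a, fun y hy => hrow a (hy.1.trans (hinv a).1.symm)⟩

theorem isNAFILOp_equiv {M N : Type} (e : N ≃ M) {m : M → M → M} (h : IsNAFILOp m) :
    IsNAFILOp (fun a b => e.symm (m (e a) (e b))) := by
  obtain ⟨i, h1, h2, h3, h4, h5, h6⟩ := h
  refine ⟨e.symm i, ?_, ?_, ?_, ?_, ?_, ?_⟩
  · intro a; simp [h1]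
  · intro a; simp [h2]
  · intro a b
    obtain ⟨x, hx, hux⟩ := h3 (e a) (e b)
    refine ⟨e.symm x, by simp [hx], fun y hy => ?_⟩
    have hy' : m (e a) (e y) = e b := by
      have := congrArg e hy; simpa using this
    rw [← hux _ hy', Equiv.symm_apply_apply]
  · intro a b
    obtain ⟨x, hx, hux⟩ := h4 (e a) (e b)
    refine ⟨e.symm x, by simp [hx], fun y hy => ?_⟩
    have hy' : m (e y) (e a) = e b := by
      have := congrArg e hy; simpa using this
    rw [← hux _ hy', Equiv.symm_apply_apply]
  · intro a
    obtain ⟨y, ⟨hy1, hy2⟩, huy⟩ := h5 (e a)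
    refine ⟨e.symm y, ⟨by simp [hy1], by simp [hy2]⟩, fun z ⟨hz1, hz2⟩ => ?_⟩
    have hz1' : m (e a) (e z) = i := by
      have := congrArg e hz1; simpa using this
    have hz2' : m (e z) (e a) = i := by
      have := congrArg e hz2; simpa using this
    rw [← huy _ ⟨hz1', hz2'⟩, Equiv.symm_apply_apply]
  · intro hall; apply h6; intro a b c
    have H := hall (e.symm a) (e.symm b) (e.symm c)
    simp only [Equiv.apply_symm_apply] at H
    exact e.symm.injective H
-- base loop section (standalone test; will merge)
section Base
variable (h b : ℕ)

def Lop (x y : ZMod (2*h)) : ZMod (2*h) :=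
  x + y +
    if (x = (b : ZMod (2*h)) ∨ x = (b : ZMod (2*h)) + (h : ZMod (2*h))) ∧
       (y = (b : ZMod (2*h)) ∨ y = (b : ZMod (2*h)) + (h : ZMod (2*h))) then (h : ZMod (2*h)) else 0

variable {h b}

lemma cast_inj_lt {m a c : ℕ} [NeZero m] (ha : a < m) (hc : c < m) :
    ((a : ZMod m) = (c : ZMod m)) ↔ a = c := by
  constructor
  · intro H
    have := congrArg ZMod.val H
    rwa [ZMod.val_cast_of_lt ha, ZMod.val_cast_of_lt hc] at this
  · rintro rfl; rfl

lemma castShift {m a c : ℕ} (H : c + m = a) : ((a : ℕ) : ZMod m) = (c : ZMod m) := by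
  subst H
  push_cast [ZMod.natCast_self]
  ring

lemma hh0 (hpos : 0 < h) : (h : ZMod (2*h)) + (h : ZMod (2*h)) = 0 := by
  have := ZMod.natCast_self (2*h)
  push_cast at this
  linear_combination this

lemma Lop_comm (x y : ZMod (2*h)) : Lop h b x y = Lop h b y x := by
  unfold Lop
  by_cases cx : (x = (b : ZMod (2*h)) ∨ x = (b : ZMod (2*h)) + (h : ZMod (2*h))) <;>
    by_cases cy : (y = (b : ZMod (2*h)) ∨ y = (b : ZMod (2*h)) + (h : ZMod (2*h))) <;>
    simp only [cx, cy, and_true, and_false, true_and, false_and, if_true, if_false,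
      if_neg, if_pos] <;> ring_nf <;> simp [cx, cy] <;> ring

lemma Lop_row_inj (hpos : 0 < h) (x : ZMod (2*h)) : Function.Injective (Lop h b x) := by
  have hB : (b : ZMod (2*h)) + h + h = b := by
    have := hh0 hpos
    linear_combination this
  intro y z H
  unfold Lop at H
  by_cases cx : (x = (b : ZMod (2*h)) ∨ x = (b : ZMod (2*h)) + (h : ZMod (2*h)))
  · by_cases cy : (y = (b : ZMod (2*h)) ∨ y = (b : ZMod (2*h)) + (h : ZMod (2*h))) <;>
      by_cases cz : (z = (b : ZMod (2*h)) ∨ z = (b : ZMod (2*h)) + (h : ZMod (2*h)))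
    · rw [if_pos ⟨cx, cy⟩, if_pos ⟨cx, cz⟩] at H
      linear_combination H
    · rw [if_pos ⟨cx, cy⟩, if_neg (fun hc => cz hc.2)] at H
      exfalso
      have hz : z = y + h := by linear_combination -H
      rcases cy with rfl | rfl
      · exact cz (Or.inr hz)
      · exact cz (Or.inl (by rw [hz]; linear_combination hh0 hpos))
    · rw [if_neg (fun hc => cy hc.2), if_pos ⟨cx, cz⟩] at H
      exfalso
      have hy : y = z + h := by linear_combination H
      rcases cz with rfl | rfl
      · exact cy (Or.inr hy)
      · exact cy (Or.inl (by rw [hy]; linear_combination hh0 hpos))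
    · rw [if_neg (fun hc => cy hc.2), if_neg (fun hc => cz hc.2)] at H
      linear_combination H
  · rw [if_neg (fun hc => cx hc.1), if_neg (fun hc => cx hc.1)] at H
    linear_combination H

lemma Lop_col_inj (hpos : 0 < h) (y : ZMod (2*h)) :
    Function.Injective (fun x => Lop h b x y) := by
  intro x z H
  simp only [Lop_comm (b := b) x y, Lop_comm (b := b) z y] at H
  exact Lop_row_inj hpos y H

lemma Lop_id_left (hb0 : (b : ZMod (2*h)) ≠ 0) (hbh0 : (b : ZMod (2*h)) + h ≠ 0)
    (y : ZMod (2*h)) : Lop h b 0 y = y := by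
  unfold Lop
  rw [if_neg (fun hc => hc.1.elim (fun hh => hb0 hh.symm) (fun hh => hbh0 hh.symm))]
  ring

lemma Lop_id_right (hb0 : (b : ZMod (2*h)) ≠ 0) (hbh0 : (b : ZMod (2*h)) + h ≠ 0)
    (y : ZMod (2*h)) : Lop h b y 0 = y := by
  rw [Lop_comm]; exact Lop_id_left hb0 hbh0 y

/-- inverse, configuration A : `2b ≠ 0` and `2b+h ≠ 0`; inverse is negation. -/
lemma Lop_neg_invA (hpos : 0 < h) (H1 : (b : ZMod (2*h)) + b ≠ 0)
    (H2 : (b : ZMod (2*h)) + b + h ≠ 0) (a : ZMod (2*h)) : Lop h b a (-a) = 0 := by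
  unfold Lop
  rw [if_neg, add_neg_cancel, zero_add]
  rintro ⟨(rfl | hc1), hc2⟩
  · rcases hc2 with hc | hc
    · exact H1 (by linear_combination -hc)
    · exact H2 (by linear_combination -hc)
  · rcases hc2 with hc | hc
    · exact H2 (by linear_combination -hc - hc1)
    · exact H1 (by linear_combination -hc - hc1 - hh0 hpos)

/-- inverse, configuration B : `2b + h = 0`; B-elements are self-inverse. -/
lemma Lop_invB (hpos : 0 < h) (H : (b : ZMod (2*h)) + b + h = 0) (a : ZMod (2*h)) :
    Lop h b a (if a = (b : ZMod (2*h)) ∨ a = (b : ZMod (2*h)) + h then a else -a) = 0 := by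
  by_cases ca : a = (b : ZMod (2*h)) ∨ a = (b : ZMod (2*h)) + h
  · rw [if_pos ca]
    unfold Lop
    rw [if_pos ⟨ca, ca⟩]
    rcases ca with rfl | rfl
    · linear_combination H
    · linear_combination H + hh0 hpos
  · rw [if_neg ca]
    unfold Lop
    rw [if_neg, add_neg_cancel, zero_add]
    rintro ⟨hc1, -⟩
    rcases hc1 with hc | hc
    · exact ca (Or.inl hc)
    · exact ca (Or.inr hc)

lemma Lop_nonassoc (hpos : 0 < h)
    (hb0 : (b : ZMod (2*h)) ≠ 0) (hbh0 : (b : ZMod (2*h)) + h ≠ 0)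
    (h10 : (1 : ZMod (2*h)) ≠ 0) (h1h : (1 : ZMod (2*h)) ≠ h)
    (hb10 : (b : ZMod (2*h)) + 1 ≠ 0) (hb1h : (b : ZMod (2*h)) + 1 ≠ h)
    (hH : (h : ZMod (2*h)) ≠ 0) :
    Lop h b (Lop h b b b) ((b : ZMod (2*h)) + 1) ≠
      Lop h b b (Lop h b b ((b : ZMod (2*h)) + 1)) := by
  have e1 : Lop h b b b = (b : ZMod (2*h)) + b + h := by
    unfold Lop; rw [if_pos ⟨Or.inl rfl, Or.inl rfl⟩]
  have e2 : Lop h b ((b : ZMod (2*h)) + b + h) ((b : ZMod (2*h)) + 1)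
      = (b : ZMod (2*h)) + b + h + (b + 1) := by
    unfold Lop
    rw [if_neg, add_zero]
    rintro ⟨hc, -⟩
    rcases hc with hc | hc
    · exact hbh0 (by linear_combination hc)
    · exact hb0 (by linear_combination hc)
  have e3 : Lop h b b ((b : ZMod (2*h)) + 1) = (b : ZMod (2*h)) + (b + 1) := by
    unfold Lop
    rw [if_neg, add_zero]
    rintro ⟨-, hc⟩
    rcases hc with hc | hc
    · exact h10 (by linear_combination hc)
    · exact h1h (by linear_combination hc)
  have e4 : Lop h b b ((b : ZMod (2*h)) + (b + 1)) = (b : ZMod (2*h)) + (b + (b + 1)) := by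
    unfold Lop
    rw [if_neg, add_zero]
    rintro ⟨-, hc⟩
    rcases hc with hc | hc
    · exact hb10 (by linear_combination hc)
    · exact hb1h (by linear_combination hc)
  rw [e1, e2, e3, e4]
  intro HH
  exact hH (by linear_combination HH)

end Base

section Pro
variable {M : Type} [Fintype M] [DecidableEq M]
variable (op : M → M → M) (e : M) (τ u : M → M)

def pro : Option M → Option M → Option M
  | some x, some y => if τ x = y ∧ x ≠ e then none else some (op x y)
  | some x, none => if x = e then none else some (op x (τ x))
  | none, some y => if y = e then none else some (u y)
  | none, none => some e

lemma pro_ss (x y : M) :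
    pro op e τ u (some x) (some y) = if τ x = y ∧ x ≠ e then none else some (op x y) := rfl
lemma pro_sn (x : M) :
    pro op e τ u (some x) none = if x = e then none else some (op x (τ x)) := rfl
lemma pro_ns (y : M) :
    pro op e τ u none (some y) = if y = e then none else some (u y) := rfl
lemma pro_nn : pro op e τ u none none = some e := rfl

variable {op e τ u}
variable (hid1 : ∀ a, op e a = a) (hid2 : ∀ a, op a e = a)
  (hrow : ∀ a, Function.Injective (op a))
  (hcol : ∀ y, Function.Injective (fun x => op x y))
  (hτ : Function.Injective τ) (hτe : τ e = e)
  (hu : ∀ x, u (τ x) = op x (τ x))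
  (hv : Function.Injective (fun x => op x (τ x)))

include hτ in
lemma pro_tau_surj : Function.Surjective τ := Finite.injective_iff_surjective.mp hτ

include hid1 hτe in
lemma pro_ve : op e (τ e) = e := by rw [hτe, hid1]

include hid1 in
lemma pro_id_left (z : Option M) : pro op e τ u (some e) z = z := by
  cases z with
  | some y =>
    rw [pro_ss, if_neg (fun hc => hc.2 rfl), hid1]
  | none => rw [pro_sn, if_pos rfl]

include hid2 hτ hτe in
lemma pro_id_right (z : Option M) : pro op e τ u z (some e) = z := by
  cases z with
  | some x =>
    rw [pro_ss, if_neg, hid2]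
    rintro ⟨hc1, hc2⟩
    exact hc2 (hτ (hc1.trans hτe.symm))
  | none => rw [pro_ns, if_pos rfl]

include hid1 hrow hτ hτe hu hv in
lemma pro_row_inj (a : Option M) : Function.Injective (pro op e τ u a) := by
  have hτs := pro_tau_surj hτ
  have hve := pro_ve hid1 hτe
  intro y z H
  cases a with
  | none =>
    cases y with
    | none =>
      cases z with
      | none => rfl
      | some z =>
        exfalso
        rw [pro_nn, pro_ns] at H
        by_cases hz : z = e
        · rw [if_pos hz] at H; exact nomatch H
        · rw [if_neg hz] at H
          obtain ⟨x, rfl⟩ := hτs z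
          rw [hu] at H
          have hxe : x = e := hv (((Option.some.inj H).symm).trans hve.symm)
          exact hz (by rw [hxe, hτe])
    | some y =>
      cases z with
      | none =>
        exfalso
        rw [pro_nn, pro_ns] at H
        by_cases hy : y = e
        · rw [if_pos hy] at H; exact nomatch H
        · rw [if_neg hy] at H
          obtain ⟨x, rfl⟩ := hτs y
          rw [hu] at H
          have hxe : x = e := hv ((Option.some.inj H).trans hve.symm)
          exact hy (by rw [hxe, hτe])
      | some z =>
        rw [pro_ns, pro_ns] at H
        by_cases hy : y = e <;> by_cases hz : z = e
        · rw [hy, hz]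
        · rw [if_pos hy, if_neg hz] at H; exact nomatch H
        · rw [if_neg hy, if_pos hz] at H; exact nomatch H
        · rw [if_neg hy, if_neg hz] at H
          obtain ⟨x1, rfl⟩ := hτs y
          obtain ⟨x2, rfl⟩ := hτs z
          rw [hu, hu] at H
          exact congrArg (fun t => some (τ t)) (hv (Option.some.inj H))
  | some x =>
    cases y with
    | none =>
      cases z with
      | none => rfl
      | some z =>
        exfalso
        rw [pro_sn, pro_ss] at H
        by_cases hx : x = e
        · rw [if_pos hx] at H
          by_cases hc : τ x = z ∧ x ≠ e
          · exact (hc.2 hx)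
          · rw [if_neg hc] at H; exact nomatch H
        · rw [if_neg hx] at H
          by_cases hc : τ x = z ∧ x ≠ e
          · rw [if_pos hc] at H; exact nomatch H
          · rw [if_neg hc] at H
            have := hrow x (Option.some.inj H)
            exact hc ⟨this, hx⟩
    | some y =>
      cases z with
      | none =>
        exfalso
        rw [pro_ss, pro_sn] at H
        by_cases hx : x = e
        · rw [if_pos hx] at H
          by_cases hc : τ x = y ∧ x ≠ e
          · exact (hc.2 hx)
          · rw [if_neg hc] at H; exact nomatch H
        · rw [if_neg hx] at H
          by_cases hc : τ x = y ∧ x ≠ e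
          · rw [if_pos hc] at H; exact nomatch H
          · rw [if_neg hc] at H
            have := hrow x (Option.some.inj H)
            exact hc ⟨this.symm, hx⟩
      | some z =>
        rw [pro_ss, pro_ss] at H
        by_cases hc1 : τ x = y ∧ x ≠ e <;> by_cases hc2 : τ x = z ∧ x ≠ e
        · rw [← hc1.1, ← hc2.1]
        · rw [if_pos hc1, if_neg hc2] at H; exact nomatch H
        · rw [if_neg hc1, if_pos hc2] at H; exact nomatch H
        · rw [if_neg hc1, if_neg hc2] at H
          exact congrArg some (hrow x (Option.some.inj H))

include hid1 hid2 hcol hτ hτe hu hv in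
lemma pro_col_inj (y : Option M) : Function.Injective (fun a => pro op e τ u a y) := by
  have hτs := pro_tau_surj hτ
  have hve := pro_ve hid1 hτe
  intro a c H
  simp only at H
  cases y with
  | none =>
    cases a with
    | none =>
      cases c with
      | none => rfl
      | some c =>
        exfalso
        rw [pro_nn, pro_sn] at H
        by_cases hc : c = e
        · rw [if_pos hc] at H; exact nomatch H
        · rw [if_neg hc] at H
          exact hc (hv (((Option.some.inj H).symm).trans hve.symm))
    | some a =>
      cases c with
      | none =>
        exfalso
        rw [pro_sn, pro_nn] at H
        by_cases ha : a = e
        · rw [if_pos ha] at H; exact nomatch H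
        · rw [if_neg ha] at H
          exact ha (hv ((Option.some.inj H).trans hve.symm))
      | some c =>
        rw [pro_sn, pro_sn] at H
        by_cases ha : a = e <;> by_cases hc : c = e
        · rw [ha, hc]
        · rw [if_pos ha, if_neg hc] at H; exact nomatch H
        · rw [if_neg ha, if_pos hc] at H; exact nomatch H
        · rw [if_neg ha, if_neg hc] at H
          exact congrArg some (hv (Option.some.inj H))
  | some y =>
    cases a with
    | none =>
      cases c with
      | none => rfl
      | some c =>
        exfalso
        rw [pro_ns, pro_ss] at H
        by_cases hy : y = e
        · rw [if_pos hy] at H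
          by_cases hc2 : τ c = y ∧ c ≠ e
          · exact hc2.2 (hτ (hc2.1.trans (hy.trans hτe.symm)))
          · rw [if_neg hc2] at H; exact nomatch H
        · rw [if_neg hy] at H
          by_cases hc2 : τ c = y ∧ c ≠ e
          · rw [if_pos hc2] at H; exact nomatch H
          · rw [if_neg hc2] at H
            obtain ⟨x, hx⟩ := hτs y
            have HU : u y = op c y := Option.some.inj H
            rw [← hx, hu] at HU
            have hxc : x = c := hcol (τ x) HU
            refine hc2 ⟨by rw [← hxc, hx], fun hce => hy ?_⟩
            rw [← hx, hxc, hce, hτe]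
    | some a =>
      cases c with
      | none =>
        exfalso
        rw [pro_ss, pro_ns] at H
        by_cases hy : y = e
        · rw [if_pos hy] at H
          by_cases hc1 : τ a = y ∧ a ≠ e
          · exact hc1.2 (hτ (hc1.1.trans (hy.trans hτe.symm)))
          · rw [if_neg hc1] at H; exact nomatch H
        · rw [if_neg hy] at H
          by_cases hc1 : τ a = y ∧ a ≠ e
          · rw [if_pos hc1] at H; exact nomatch H
          · rw [if_neg hc1] at H
            obtain ⟨x, hx⟩ := hτs y
            have HU : op a y = u y := Option.some.inj H
            rw [← hx, hu] at HU
            have hxc : a = x := hcol (τ x) HU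
            refine hc1 ⟨by rw [hxc, hx], fun hae => hy ?_⟩
            rw [← hx, ← hxc, hae, hτe]
      | some c =>
        rw [pro_ss, pro_ss] at H
        by_cases hc1 : τ a = y ∧ a ≠ e <;> by_cases hc2 : τ c = y ∧ c ≠ e
        · exact congrArg some (hτ (hc1.1.trans hc2.1.symm))
        · rw [if_pos hc1, if_neg hc2] at H; exact nomatch H
        · rw [if_neg hc1, if_pos hc2] at H; exact nomatch H
        · rw [if_neg hc1, if_neg hc2] at H
          exact congrArg some (hcol y (Option.some.inj H))

include hid1 hτe hv in
lemma pro_inv (ι : M → M) (hι : ∀ a, op a (ι a) = e ∧ op (ι a) a = e) (a : Option M) :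
    pro op e τ u a (Option.map ι a) = some e ∧
      pro op e τ u (Option.map ι a) a = some e := by
  have hve := pro_ve hid1 hτe
  cases a with
  | none => exact ⟨rfl, rfl⟩
  | some a =>
    constructor
    · show pro op e τ u (some a) (some (ι a)) = some e
      rw [pro_ss, if_neg, (hι a).1]
      rintro ⟨hc1, hc2⟩
      refine hc2 (hv ?_)
      show op a (τ a) = op e (τ e)
      rw [hc1, (hι a).1, hve]
    · show pro op e τ u (some (ι a)) (some a) = some e
      rw [pro_ss, if_neg, (hι a).2]
      rintro ⟨hc1, hc2⟩
      refine hc2 (hv ?_)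
      show op (ι a) (τ (ι a)) = op e (τ e)
      rw [hc1, (hι a).2, hve]

end Pro
-- parity 2 : m = 2h, h odd, b = (h-1)/2
def tau2Nat (h x : ℕ) : ℕ := if x < h then x else if x = 2*h - 1 then h else x + 1
def v2Nat (h b x : ℕ) : ℕ :=
  if x < h then (if x = b then 2*h - 1 else 2*x) else if x = 2*h - 1 then h - 1 else 2*x + 1 - 2*h
def u2Nat (h b y : ℕ) : ℕ :=
  if y < h then (if y = b then 2*h - 1 else 2*y) else if y = h then h - 1 else 2*y - 1 - 2*h

section P2
variable {h b : ℕ} (hb : 2*b+1 = h) (hb0 : 1 ≤ b)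

include hb hb0

lemma tau2Nat_lt {x : ℕ} (hx : x < 2*h) : tau2Nat h x < 2*h := by
  unfold tau2Nat; split_ifs <;> omega

lemma tau2Nat_inj {x y : ℕ} (hx : x < 2*h) (hy : y < 2*h)
    (H : tau2Nat h x = tau2Nat h y) : x = y := by
  unfold tau2Nat at H; split_ifs at H <;> omega

lemma v2Nat_lt {x : ℕ} (hx : x < 2*h) : v2Nat h b x < 2*h := by
  unfold v2Nat; split_ifs <;> omega

lemma v2Nat_inj {x y : ℕ} (hx : x < 2*h) (hy : y < 2*h)
    (H : v2Nat h b x = v2Nat h b y) : x = y := by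
  unfold v2Nat at H; split_ifs at H <;> omega

lemma u2tau2Nat {x : ℕ} (hx : x < 2*h) : u2Nat h b (tau2Nat h x) = v2Nat h b x := by
  unfold tau2Nat v2Nat
  split_ifs <;> (unfold u2Nat) <;> split_ifs <;> omega

end P2

section P2Z
variable {h b : ℕ} (hb : 2*b+1 = h) (hb0 : 1 ≤ b)

def tau2 (h : ℕ) (x : ZMod (2*h)) : ZMod (2*h) := ((tau2Nat h x.val : ℕ) : ZMod (2*h))
def u2 (h b : ℕ) (y : ZMod (2*h)) : ZMod (2*h) := ((u2Nat h b y.val : ℕ) : ZMod (2*h))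

include hb hb0

lemma neZero2h : NeZero (2*h) := ⟨by omega⟩

lemma tau2_inj : Function.Injective (tau2 h) := by
  haveI := neZero2h hb hb0
  intro x y H
  apply ZMod.val_injective
  exact tau2Nat_inj hb hb0 x.val_lt y.val_lt
    ((cast_inj_lt (tau2Nat_lt hb hb0 x.val_lt) (tau2Nat_lt hb hb0 y.val_lt)).mp H)

lemma tau2_zero : tau2 h 0 = 0 := by
  haveI := neZero2h hb hb0
  unfold tau2
  rw [ZMod.val_zero]
  unfold tau2Nat
  rw [if_pos (by omega)]
  simp

lemma natcast_val_eq (x : ZMod (2*h)) : ((x.val : ℕ) : ZMod (2*h)) = x := by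
  haveI := neZero2h hb hb0
  rw [ZMod.natCast_val, ZMod.cast_id]

lemma cond_iff (j : ℕ) (hj : j < 2*h) :
    (((j : ZMod (2*h)) = (b : ZMod (2*h)) ∨
      (j : ZMod (2*h)) = (b : ZMod (2*h)) + (h : ZMod (2*h))) ↔ (j = b ∨ j = b + h)) := by
  haveI := neZero2h hb hb0
  rw [show (b : ZMod (2*h)) + (h : ZMod (2*h)) = ((b + h : ℕ) : ZMod (2*h)) by push_cast; ring]
  rw [cast_inj_lt hj (by omega : b < 2*h), cast_inj_lt hj (by omega : b + h < 2*h)]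

lemma Lop_tau2 (x : ZMod (2*h)) :
    Lop h b x (tau2 h x) = ((v2Nat h b x.val : ℕ) : ZMod (2*h)) := by
  haveI := neZero2h hb hb0
  obtain ⟨k, hklt, rfl⟩ : ∃ k, k < 2*h ∧ x = ((k : ℕ) : ZMod (2*h)) :=
    ⟨x.val, x.val_lt, (natcast_val_eq hb hb0 x).symm⟩
  unfold tau2
  rw [show (((k : ℕ) : ZMod (2*h))).val = k from ZMod.val_cast_of_lt hklt]
  by_cases h1 : k < h
  · have ht : tau2Nat h k = k := by unfold tau2Nat; rw [if_pos h1]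
    by_cases h2 : k = b
    · have hv : v2Nat h b k = 2*h - 1 := by unfold v2Nat; rw [if_pos h1, if_pos h2]
      unfold Lop
      rw [ht, hv, if_pos]
      · rw [show ((2*h-1 : ℕ) : ZMod (2*h)) = ((b + b + h : ℕ) : ZMod (2*h)) by
          rw [show b + b + h = 2*h-1 by omega]]
        rw [(cast_inj_lt hklt (by omega)).mpr h2]
        push_cast; ring
      · exact ⟨(cond_iff hb hb0 k hklt).mpr (Or.inl h2),
          (cond_iff hb hb0 k hklt).mpr (Or.inl h2)⟩
    · have hv : v2Nat h b k = 2*k := by unfold v2Nat; rw [if_pos h1, if_neg h2]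
      unfold Lop
      rw [ht, hv, if_neg, add_zero]
      · push_cast; ring
      · rintro ⟨-, hc2⟩
        have := (cond_iff hb hb0 k hklt).mp hc2
        omega
  · by_cases h2 : k = 2*h - 1
    · have ht : tau2Nat h k = h := by unfold tau2Nat; rw [if_neg h1, if_pos h2]
      have hv : v2Nat h b k = h - 1 := by unfold v2Nat; rw [if_neg h1, if_pos h2]
      unfold Lop
      rw [ht, hv, if_neg, add_zero]
      · rw [← castShift (show (h-1) + 2*h = k + h by omega)]
        push_cast; ring
      · rintro ⟨-, hc2⟩
        have := (cond_iff hb hb0 h (by omega)).mp hc2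
        omega
    · have ht : tau2Nat h k = k + 1 := by unfold tau2Nat; rw [if_neg h1, if_neg h2]
      have hv : v2Nat h b k = 2*k + 1 - 2*h := by unfold v2Nat; rw [if_neg h1, if_neg h2]
      unfold Lop
      rw [ht, hv, if_neg, add_zero]
      · rw [← castShift (show (2*k+1-2*h) + 2*h = k + (k+1) by omega)]
        push_cast; ring
      · rintro ⟨hc1, hc2⟩
        have H1 := (cond_iff hb hb0 k hklt).mp hc1
        have H2 := (cond_iff hb hb0 (k+1) (by omega)).mp hc2
        omega

lemma vL2_inj : Function.Injective (fun x => Lop h b x (tau2 h x)) := by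
  haveI := neZero2h hb hb0
  intro x y H
  simp only [Lop_tau2 hb hb0] at H
  apply ZMod.val_injective
  exact v2Nat_inj hb hb0 x.val_lt y.val_lt
    ((cast_inj_lt (v2Nat_lt hb hb0 x.val_lt) (v2Nat_lt hb hb0 y.val_lt)).mp H)

lemma u2tau2 (x : ZMod (2*h)) : u2 h b (tau2 h x) = Lop h b x (tau2 h x) := by
  haveI := neZero2h hb hb0
  unfold u2
  rw [show (tau2 h x).val = tau2Nat h x.val from
    ZMod.val_cast_of_lt (tau2Nat_lt hb hb0 x.val_lt)]
  rw [u2tau2Nat hb hb0 x.val_lt, Lop_tau2 hb hb0]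

end P2Z
-- parity 0 : m = 2h, h even, b = h/2
def tau0Nat (h x : ℕ) : ℕ := if x = 0 then 0 else if x < h then x + h else x + 1 - h
def v0Nat (h b x : ℕ) : ℕ :=
  if x = 0 then 0 else if x < b then 2*x+h else if x = b then h else if x < h then 2*x - h
    else if x < h + b then 2*x+1-h else 2*x+1-3*h
def u0Nat (h b y : ℕ) : ℕ :=
  if y = 0 then 0 else if y ≤ b then 2*y+h-1 else if y ≤ h then 2*y-h-1
    else if y < h+b then 2*y-h else if y = h+b then h else 2*y-3*h

section P0
variable {h b : ℕ} (hb : 2*b = h) (hb2 : 2 ≤ b)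

include hb hb2

lemma tau0Nat_lt {x : ℕ} (hx : x < 2*h) : tau0Nat h x < 2*h := by
  unfold tau0Nat; split_ifs <;> omega

lemma tau0Nat_inj {x y : ℕ} (hx : x < 2*h) (hy : y < 2*h)
    (H : tau0Nat h x = tau0Nat h y) : x = y := by
  unfold tau0Nat at H; split_ifs at H <;> omega

lemma v0Nat_lt {x : ℕ} (hx : x < 2*h) : v0Nat h b x < 2*h := by
  unfold v0Nat; split_ifs <;> omega

lemma v0Nat_inj {x y : ℕ} (hx : x < 2*h) (hy : y < 2*h)
    (H : v0Nat h b x = v0Nat h b y) : x = y := by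
  unfold v0Nat at H; split_ifs at H <;> omega

lemma u0tau0Nat {x : ℕ} (hx : x < 2*h) : u0Nat h b (tau0Nat h x) = v0Nat h b x := by
  unfold tau0Nat v0Nat
  split_ifs <;> (unfold u0Nat) <;> split_ifs <;> omega

end P0

section P0Z
variable {h b : ℕ} (hb : 2*b = h) (hb2 : 2 ≤ b)

def tau0 (h : ℕ) (x : ZMod (2*h)) : ZMod (2*h) := ((tau0Nat h x.val : ℕ) : ZMod (2*h))
def u0 (h b : ℕ) (y : ZMod (2*h)) : ZMod (2*h) := ((u0Nat h b y.val : ℕ) : ZMod (2*h))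

include hb hb2

lemma neZero2h0 : NeZero (2*h) := ⟨by omega⟩

lemma tau0_inj : Function.Injective (tau0 h) := by
  haveI := neZero2h0 hb hb2
  intro x y H
  apply ZMod.val_injective
  exact tau0Nat_inj hb hb2 x.val_lt y.val_lt
    ((cast_inj_lt (tau0Nat_lt hb hb2 x.val_lt) (tau0Nat_lt hb hb2 y.val_lt)).mp H)

lemma tau0_zero : tau0 h 0 = 0 := by
  haveI := neZero2h0 hb hb2
  unfold tau0
  rw [ZMod.val_zero]
  unfold tau0Nat
  rw [if_pos rfl]
  simp

lemma natcast_val_eq0 (x : ZMod (2*h)) : ((x.val : ℕ) : ZMod (2*h)) = x := by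
  haveI := neZero2h0 hb hb2
  rw [ZMod.natCast_val, ZMod.cast_id]

lemma cond_iff0 (j : ℕ) (hj : j < 2*h) :
    (((j : ZMod (2*h)) = (b : ZMod (2*h)) ∨
      (j : ZMod (2*h)) = (b : ZMod (2*h)) + (h : ZMod (2*h))) ↔ (j = b ∨ j = b + h)) := by
  haveI := neZero2h0 hb hb2
  rw [show (b : ZMod (2*h)) + (h : ZMod (2*h)) = ((b + h : ℕ) : ZMod (2*h)) by push_cast; ring]
  rw [cast_inj_lt hj (by omega : b < 2*h), cast_inj_lt hj (by omega : b + h < 2*h)]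

lemma Lop_tau0 (x : ZMod (2*h)) :
    Lop h b x (tau0 h x) = ((v0Nat h b x.val : ℕ) : ZMod (2*h)) := by
  haveI := neZero2h0 hb hb2
  obtain ⟨k, hklt, rfl⟩ : ∃ k, k < 2*h ∧ x = ((k : ℕ) : ZMod (2*h)) :=
    ⟨x.val, x.val_lt, (natcast_val_eq0 hb hb2 x).symm⟩
  unfold tau0
  rw [show (((k : ℕ) : ZMod (2*h))).val = k from ZMod.val_cast_of_lt hklt]
  by_cases h0 : k = 0
  · subst h0
    have ht : tau0Nat h 0 = 0 := by unfold tau0Nat; rw [if_pos rfl]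
    have hv : v0Nat h b 0 = 0 := by unfold v0Nat; rw [if_pos rfl]
    unfold Lop
    rw [ht, hv, if_neg, add_zero]
    · push_cast; ring
    · rintro ⟨hc1, -⟩
      have := (cond_iff0 hb hb2 0 (by omega)).mp (by exact_mod_cast hc1)
      omega
  · by_cases h1 : k < h
    · have ht : tau0Nat h k = k + h := by unfold tau0Nat; rw [if_neg h0, if_pos h1]
      by_cases h2 : k = b
      · have hv : v0Nat h b k = h := by
          unfold v0Nat; rw [if_neg h0, if_neg (by omega), if_pos h2]
        unfold Lop
        rw [ht, hv, if_pos]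
        · conv_rhs => rw [← castShift (show h + 2*h = k + (k+h) + h by omega)]
          push_cast; ring
        · refine ⟨(cond_iff0 hb hb2 k hklt).mpr (Or.inl h2),
            (cond_iff0 hb hb2 (k+h) (by omega)).mpr (Or.inr (by omega))⟩
      · unfold Lop
        rw [ht, if_neg, add_zero]
        · by_cases h3 : k < b
          · have hv : v0Nat h b k = 2*k+h := by
              unfold v0Nat; rw [if_neg h0, if_pos h3]
            rw [hv]; push_cast; ring
          · have hv : v0Nat h b k = 2*k-h := by
              unfold v0Nat; rw [if_neg h0, if_neg h3, if_neg h2, if_pos h1]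
            rw [hv, ← castShift (show (2*k-h) + 2*h = k + (k+h) by omega)]
            push_cast; ring
        · rintro ⟨hc1, -⟩
          have := (cond_iff0 hb hb2 k hklt).mp hc1
          omega
    · obtain ⟨j, rfl⟩ : ∃ j, k = j + h := ⟨k - h, by omega⟩
      have ht : tau0Nat h (j+h) = j + 1 := by
        unfold tau0Nat; rw [if_neg h0, if_neg (by omega)]; omega
      unfold Lop
      rw [ht, if_neg, add_zero]
      · by_cases h3 : j < b
        · have hv : v0Nat h b (j+h) = 2*j+h+1 := by
            unfold v0Nat
            rw [if_neg h0, if_neg (by omega), if_neg (by omega), if_neg (by omega),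
              if_pos (by omega)]
            omega
          rw [hv]; push_cast; ring
        · have hv : v0Nat h b (j+h) = 2*j+1-h := by
            unfold v0Nat
            rw [if_neg h0, if_neg (by omega), if_neg (by omega), if_neg (by omega),
              if_neg (by omega)]
            omega
          rw [hv, ← castShift (show (2*j+1-h) + 2*h = (j+h) + (j+1) by omega)]
          push_cast; ring
      · rintro ⟨hc1, hc2⟩
        have H1 := (cond_iff0 hb hb2 (j+h) hklt).mp hc1
        have H2 := (cond_iff0 hb hb2 (j+1) (by omega)).mp hc2
        omega

lemma vL0_inj : Function.Injective (fun x => Lop h b x (tau0 h x)) := by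
  haveI := neZero2h0 hb hb2
  intro x y H
  simp only [Lop_tau0 hb hb2] at H
  apply ZMod.val_injective
  exact v0Nat_inj hb hb2 x.val_lt y.val_lt
    ((cast_inj_lt (v0Nat_lt hb hb2 x.val_lt) (v0Nat_lt hb hb2 y.val_lt)).mp H)

lemma u0tau0 (x : ZMod (2*h)) : u0 h b (tau0 h x) = Lop h b x (tau0 h x) := by
  haveI := neZero2h0 hb hb2
  unfold u0
  rw [show (tau0 h x).val = tau0Nat h x.val from
    ZMod.val_cast_of_lt (tau0Nat_lt hb hb2 x.val_lt)]
  rw [u0tau0Nat hb hb2 x.val_lt, Lop_tau0 hb hb2]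

end P0Z

-- additional cast helpers
lemma cast_ne {m a c : ℕ} [NeZero m] (ha : a < m) (hc : c < m) (h : a ≠ c) :
    ((a : ℕ) : ZMod m) ≠ ((c : ℕ) : ZMod m) := fun H => h ((cast_inj_lt ha hc).mp H)

lemma cast_ne_zero_of {m a : ℕ} [NeZero m] (h1 : 0 < a) (h2 : a < m) :
    ((a : ℕ) : ZMod m) ≠ 0 := by
  intro H
  have H2 : ((a : ℕ) : ZMod m) = ((0 : ℕ) : ZMod m) := by simpa using H
  have := (cast_inj_lt h2 (by omega)).mp H2
  omega

/-- the even-order NAFIL -/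
theorem even_nafil {h : ℕ} (hh : 3 ≤ h) : IsNAFILOp (Lop h 1) := by
  haveI : NeZero (2*h) := ⟨by omega⟩
  have hpos : 0 < h := by omega
  have hb0 : ((1 : ℕ) : ZMod (2*h)) ≠ 0 := cast_ne_zero_of (by omega) (by omega)
  have hbh0 : ((1 : ℕ) : ZMod (2*h)) + (h : ZMod (2*h)) ≠ 0 := by
    rw [show ((1:ℕ) : ZMod (2*h)) + (h : ZMod (2*h)) = ((1+h : ℕ) : ZMod (2*h)) by
      push_cast; ring]
    exact cast_ne_zero_of (by omega) (by omega)
  have H1 : ((1 : ℕ) : ZMod (2*h)) + ((1:ℕ) : ZMod (2*h)) ≠ 0 := by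
    rw [show ((1:ℕ) : ZMod (2*h)) + ((1:ℕ) : ZMod (2*h)) = ((2 : ℕ) : ZMod (2*h)) by
      push_cast; ring]
    exact cast_ne_zero_of (by omega) (by omega)
  have H2 : ((1 : ℕ) : ZMod (2*h)) + ((1:ℕ) : ZMod (2*h)) + (h : ZMod (2*h)) ≠ 0 := by
    rw [show ((1:ℕ) : ZMod (2*h)) + ((1:ℕ) : ZMod (2*h)) + (h : ZMod (2*h))
        = ((2+h : ℕ) : ZMod (2*h)) by push_cast; ring]
    exact cast_ne_zero_of (by omega) (by omega)
  refine isNAFILOp_mk _ 0 (Lop_id_left hb0 hbh0) (Lop_id_right hb0 hbh0)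
    (Lop_row_inj hpos) (Lop_col_inj hpos) (fun a => -a)
    (fun a => ⟨Lop_neg_invA hpos H1 H2 a, by
      rw [Lop_comm]; exact Lop_neg_invA hpos H1 H2 a⟩) ?_
  intro Hall
  refine Lop_nonassoc hpos hb0 hbh0 ?_ ?_ ?_ ?_ ?_ (Hall _ _ _)
  · have := cast_ne_zero_of (m := 2*h) (a := 1) (by omega) (by omega)
    simpa using this
  · have := cast_ne (m := 2*h) (a := 1) (c := h) (by omega) (by omega) (by omega)
    simpa using this
  · rw [show ((1:ℕ) : ZMod (2*h)) + 1 = ((2 : ℕ) : ZMod (2*h)) by push_cast; ring]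
    exact cast_ne_zero_of (by omega) (by omega)
  · rw [show ((1:ℕ) : ZMod (2*h)) + 1 = ((2 : ℕ) : ZMod (2*h)) by push_cast; ring]
    have := cast_ne (m := 2*h) (a := 2) (c := h) (by omega) (by omega) (by omega)
    simpa using this
  · exact cast_ne_zero_of (by omega) (by omega)

/-- odd order, n-1 = 2h with h odd : prolongation of the base loop -/
theorem odd2_nafil {h b : ℕ} (hb : 2*b+1 = h) (hb2 : 2 ≤ b) :
    IsNAFILOp (pro (Lop h b) 0 (tau2 h) (u2 h b)) := by
  haveI : NeZero (2*h) := ⟨by omega⟩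
  have hpos : 0 < h := by omega
  have hb1 : 1 ≤ b := by omega
  have hb0 : ((b : ℕ) : ZMod (2*h)) ≠ 0 := cast_ne_zero_of (by omega) (by omega)
  have hbhcast : ((b : ℕ) : ZMod (2*h)) + (h : ZMod (2*h)) = ((b+h : ℕ) : ZMod (2*h)) := by
    push_cast; ring
  have hbh0 : ((b : ℕ) : ZMod (2*h)) + (h : ZMod (2*h)) ≠ 0 := by
    rw [hbhcast]; exact cast_ne_zero_of (by omega) (by omega)
  have H1 : ((b : ℕ) : ZMod (2*h)) + ((b:ℕ) : ZMod (2*h)) ≠ 0 := by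
    rw [show ((b:ℕ) : ZMod (2*h)) + ((b:ℕ) : ZMod (2*h)) = ((2*b : ℕ) : ZMod (2*h)) by
      push_cast; ring]
    exact cast_ne_zero_of (by omega) (by omega)
  have H2 : ((b : ℕ) : ZMod (2*h)) + ((b:ℕ) : ZMod (2*h)) + (h : ZMod (2*h)) ≠ 0 := by
    rw [show ((b:ℕ) : ZMod (2*h)) + ((b:ℕ) : ZMod (2*h)) + (h : ZMod (2*h))
        = ((2*b+h : ℕ) : ZMod (2*h)) by push_cast; ring]
    exact cast_ne_zero_of (by omega) (by omega)
  have hid1 := Lop_id_left hb0 hbh0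
  have hid2 := Lop_id_right hb0 hbh0
  have hrow := Lop_row_inj (b := b) hpos
  have hcol := Lop_col_inj (b := b) hpos
  have hτ := tau2_inj hb hb1
  have hτe := tau2_zero hb hb1
  have hu := u2tau2 hb hb1
  have hv := vL2_inj hb hb1
  refine isNAFILOp_mk _ (some 0) (pro_id_left hid1) (pro_id_right hid2 hτ hτe)
    (pro_row_inj hid1 hrow hτ hτe hu hv) (pro_col_inj hid1 hid2 hcol hτ hτe hu hv)
    (Option.map (fun a => -a))
    (pro_inv hid1 hτe hv _ (fun a => ⟨Lop_neg_invA hpos H1 H2 a, by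
      rw [Lop_comm]; exact Lop_neg_invA hpos H1 H2 a⟩)) ?_
  intro Hall
  have key := Hall (some ((1:ℕ) : ZMod (2*h))) (some ((b:ℕ) : ZMod (2*h)))
    (some ((b+h : ℕ) : ZMod (2*h)))
  -- compute tau2 values on the small elements
  have tval : ∀ j : ℕ, j < 2*h → tau2 h ((j : ℕ) : ZMod (2*h)) = ((tau2Nat h j : ℕ) : ZMod (2*h)) := by
    intro j hj
    unfold tau2
    rw [ZMod.val_cast_of_lt hj]
  have t1 : tau2 h ((1:ℕ) : ZMod (2*h)) = ((1:ℕ) : ZMod (2*h)) := by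
    rw [tval 1 (by omega)]
    unfold tau2Nat
    rw [if_pos (by omega)]
  have tb : tau2 h ((b:ℕ) : ZMod (2*h)) = ((b:ℕ) : ZMod (2*h)) := by
    rw [tval b (by omega)]
    unfold tau2Nat
    rw [if_pos (by omega)]
  have t1b : tau2 h ((1+b : ℕ) : ZMod (2*h)) = ((1+b : ℕ) : ZMod (2*h)) := by
    rw [tval (1+b) (by omega)]
    unfold tau2Nat
    rw [if_pos (by omega)]
  -- step 1 : (1 ∘ b) = 1 + b
  have e1 : pro (Lop h b) 0 (tau2 h) (u2 h b) (some ((1:ℕ) : ZMod (2*h)))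
      (some ((b:ℕ) : ZMod (2*h))) = some ((1+b : ℕ) : ZMod (2*h)) := by
    rw [pro_ss, if_neg]
    · unfold Lop
      rw [if_neg, add_zero]
      · congr 1; push_cast; ring
      · rintro ⟨hc, -⟩
        rcases hc with hc | hc
        · exact cast_ne (by omega) (by omega) (by omega) hc
        · rw [hbhcast] at hc; exact cast_ne (by omega) (by omega) (by omega) hc
    · rintro ⟨hc, -⟩
      rw [t1] at hc
      exact cast_ne (by omega) (by omega) (by omega) hc
  -- step 2 : (1+b) ∘ (b+h) = 0
  have e2 : pro (Lop h b) 0 (tau2 h) (u2 h b) (some ((1+b : ℕ) : ZMod (2*h)))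
      (some ((b+h : ℕ) : ZMod (2*h))) = some 0 := by
    rw [pro_ss, if_neg]
    · unfold Lop
      rw [if_neg, add_zero]
      · congr 1
        rw [show ((1+b:ℕ) : ZMod (2*h)) + ((b+h:ℕ) : ZMod (2*h))
            = ((1+b+(b+h) : ℕ) : ZMod (2*h)) by push_cast; ring]
        rw [show 1+b+(b+h) = 2*h by omega]
        exact ZMod.natCast_self (2*h)
      · rintro ⟨hc, -⟩
        rcases hc with hc | hc
        · exact cast_ne (by omega) (by omega) (by omega) hc
        · rw [hbhcast] at hc; exact cast_ne (by omega) (by omega) (by omega) hc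
    · rintro ⟨hc, -⟩
      rw [t1b] at hc
      exact cast_ne (by omega) (by omega) (by omega) hc
  -- step 3 : b ∘ (b+h) = h - 1
  have e3 : pro (Lop h b) 0 (tau2 h) (u2 h b) (some ((b:ℕ) : ZMod (2*h)))
      (some ((b+h : ℕ) : ZMod (2*h))) = some ((h-1 : ℕ) : ZMod (2*h)) := by
    rw [pro_ss, if_neg]
    · unfold Lop
      rw [if_pos]
      · congr 1
        rw [← castShift (show (h-1) + 2*h = b + (b+h) + h by omega)]
        push_cast; ring
      · exact ⟨Or.inl rfl, Or.inr (by rw [hbhcast])⟩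
    · rintro ⟨hc, -⟩
      rw [tb] at hc
      exact cast_ne (by omega) (by omega) (by omega) hc
  -- step 4 : 1 ∘ (h-1) = h
  have e4 : pro (Lop h b) 0 (tau2 h) (u2 h b) (some ((1:ℕ) : ZMod (2*h)))
      (some ((h-1 : ℕ) : ZMod (2*h))) = some ((h : ℕ) : ZMod (2*h)) := by
    rw [pro_ss, if_neg]
    · unfold Lop
      rw [if_neg, add_zero]
      · congr 1
        rw [show ((1:ℕ) : ZMod (2*h)) + ((h-1:ℕ) : ZMod (2*h))
            = ((1+(h-1) : ℕ) : ZMod (2*h)) by push_cast; ring]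
        rw [show 1+(h-1) = h by omega]
      · rintro ⟨hc, -⟩
        rcases hc with hc | hc
        · exact cast_ne (by omega) (by omega) (by omega) hc
        · rw [hbhcast] at hc; exact cast_ne (by omega) (by omega) (by omega) hc
    · rintro ⟨hc, -⟩
      rw [t1] at hc
      exact cast_ne (by omega) (by omega) (by omega) hc
  rw [e1, e3, e2, e4] at key
  have := Option.some.inj key
  exact cast_ne_zero_of (m := 2*h) (a := h) (by omega) (by omega) this.symm

/-- odd order, n-1 = 2h with h even : prolongation of the base loop -/
theorem odd0_nafil {h b : ℕ} (hb : 2*b = h) (hb2 : 2 ≤ b) :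
    IsNAFILOp (pro (Lop h b) 0 (tau0 h) (u0 h b)) := by
  haveI : NeZero (2*h) := ⟨by omega⟩
  have hpos : 0 < h := by omega
  have hb0 : ((b : ℕ) : ZMod (2*h)) ≠ 0 := cast_ne_zero_of (by omega) (by omega)
  have hbhcast : ((b : ℕ) : ZMod (2*h)) + (h : ZMod (2*h)) = ((b+h : ℕ) : ZMod (2*h)) := by
    push_cast; ring
  have hbh0 : ((b : ℕ) : ZMod (2*h)) + (h : ZMod (2*h)) ≠ 0 := by
    rw [hbhcast]; exact cast_ne_zero_of (by omega) (by omega)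
  have HB : ((b : ℕ) : ZMod (2*h)) + ((b:ℕ) : ZMod (2*h)) + (h : ZMod (2*h)) = 0 := by
    rw [show ((b:ℕ) : ZMod (2*h)) + ((b:ℕ) : ZMod (2*h)) + (h : ZMod (2*h))
        = ((2*b+h : ℕ) : ZMod (2*h)) by push_cast; ring]
    rw [show 2*b+h = 2*h by omega]
    exact ZMod.natCast_self (2*h)
  have hid1 := Lop_id_left hb0 hbh0
  have hid2 := Lop_id_right hb0 hbh0
  have hrow := Lop_row_inj (b := b) hpos
  have hcol := Lop_col_inj (b := b) hpos
  have hτ := tau0_inj hb hb2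
  have hτe := tau0_zero hb hb2
  have hu := u0tau0 hb hb2
  have hv := vL0_inj hb hb2
  refine isNAFILOp_mk _ (some 0) (pro_id_left hid1) (pro_id_right hid2 hτ hτe)
    (pro_row_inj hid1 hrow hτ hτe hu hv) (pro_col_inj hid1 hid2 hcol hτ hτe hu hv)
    (Option.map (fun a =>
      if a = ((b:ℕ) : ZMod (2*h)) ∨ a = ((b:ℕ) : ZMod (2*h)) + (h : ZMod (2*h)) then a else -a))
    (pro_inv hid1 hτe hv _ (fun a => ⟨Lop_invB hpos HB a, by
      rw [Lop_comm]; exact Lop_invB hpos HB a⟩)) ?_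
  intro Hall
  have key := Hall (some ((1:ℕ) : ZMod (2*h))) (some ((b:ℕ) : ZMod (2*h)))
    (some ((b:ℕ) : ZMod (2*h)))
  have tval : ∀ j : ℕ, j < 2*h → tau0 h ((j : ℕ) : ZMod (2*h)) = ((tau0Nat h j : ℕ) : ZMod (2*h)) := by
    intro j hj
    unfold tau0
    rw [ZMod.val_cast_of_lt hj]
  have t1 : tau0 h ((1:ℕ) : ZMod (2*h)) = ((1+h:ℕ) : ZMod (2*h)) := by
    rw [tval 1 (by omega)]
    unfold tau0Nat
    rw [if_neg (by omega), if_pos (by omega)]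
  have tb : tau0 h ((b:ℕ) : ZMod (2*h)) = ((b+h:ℕ) : ZMod (2*h)) := by
    rw [tval b (by omega)]
    unfold tau0Nat
    rw [if_neg (by omega), if_pos (by omega)]
  have t1b : tau0 h ((1+b : ℕ) : ZMod (2*h)) = ((1+b+h : ℕ) : ZMod (2*h)) := by
    rw [tval (1+b) (by omega)]
    unfold tau0Nat
    rw [if_neg (by omega), if_pos (by omega)]
  -- step 1 : (1 ∘ b) = 1 + b
  have e1 : pro (Lop h b) 0 (tau0 h) (u0 h b) (some ((1:ℕ) : ZMod (2*h)))
      (some ((b:ℕ) : ZMod (2*h))) = some ((1+b : ℕ) : ZMod (2*h)) := by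
    rw [pro_ss, if_neg]
    · unfold Lop
      rw [if_neg, add_zero]
      · congr 1; push_cast; ring
      · rintro ⟨hc, -⟩
        rcases hc with hc | hc
        · exact cast_ne (by omega) (by omega) (by omega) hc
        · rw [hbhcast] at hc; exact cast_ne (by omega) (by omega) (by omega) hc
    · rintro ⟨hc, -⟩
      rw [t1] at hc
      exact cast_ne (by omega) (by omega) (by omega) hc
  -- step 2 : (1+b) ∘ b = 1 + h
  have e2 : pro (Lop h b) 0 (tau0 h) (u0 h b) (some ((1+b : ℕ) : ZMod (2*h)))
      (some ((b:ℕ) : ZMod (2*h))) = some ((1+h : ℕ) : ZMod (2*h)) := by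
    rw [pro_ss, if_neg]
    · unfold Lop
      rw [if_neg, add_zero]
      · congr 1
        rw [show ((1+b:ℕ) : ZMod (2*h)) + ((b:ℕ) : ZMod (2*h))
            = ((1+b+b : ℕ) : ZMod (2*h)) by push_cast; ring]
        rw [show 1+b+b = 1+h by omega]
      · rintro ⟨hc, -⟩
        rcases hc with hc | hc
        · exact cast_ne (by omega) (by omega) (by omega) hc
        · rw [hbhcast] at hc; exact cast_ne (by omega) (by omega) (by omega) hc
    · rintro ⟨hc, -⟩
      rw [t1b] at hc
      exact cast_ne (by omega) (by omega) (by omega) hc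
  -- step 3 : b ∘ b = 0
  have e3 : pro (Lop h b) 0 (tau0 h) (u0 h b) (some ((b:ℕ) : ZMod (2*h)))
      (some ((b:ℕ) : ZMod (2*h))) = some 0 := by
    rw [pro_ss, if_neg]
    · unfold Lop
      rw [if_pos ⟨Or.inl rfl, Or.inl rfl⟩, HB]
    · rintro ⟨hc, -⟩
      rw [tb] at hc
      exact cast_ne (by omega) (by omega) (by omega) hc
  -- step 4 : 1 ∘ 0 = 1
  have e4 : pro (Lop h b) 0 (tau0 h) (u0 h b) (some ((1:ℕ) : ZMod (2*h)))
      (some 0) = some ((1:ℕ) : ZMod (2*h)) := by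
    rw [pro_ss, if_neg]
    · rw [hid2]
    · rintro ⟨hc, -⟩
      rw [t1] at hc
      exact cast_ne_zero_of (m := 2*h) (a := 1+h) (by omega) (by omega) hc
  rw [e1, e3, e2, e4] at key
  have := Option.some.inj key
  exact cast_ne (m := 2*h) (a := 1+h) (c := 1) (by omega) (by omega) (by omega) this

/-- an explicit NAFIL of order 5 -/
def t5 : Fin 5 → Fin 5 → Fin 5 :=
  ![![0,1,2,3,4], ![1,0,3,4,2], ![2,4,0,1,3], ![3,2,4,0,1], ![4,3,1,2,0]]

lemma t5_nafil : IsNAFILOp t5 := by unfold IsNAFILOp ExistsUnique; decide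

/-- an explicit NAFIL of order 7 -/
def t7 : Fin 7 → Fin 7 → Fin 7 :=
  ![![0,1,2,3,4,5,6], ![1,6,3,4,2,0,5], ![2,3,6,5,0,1,4], ![3,4,5,0,6,2,1],
    ![4,2,0,1,5,6,3], ![5,0,1,6,3,4,2], ![6,5,4,2,1,3,0]]

lemma t7_nafil : IsNAFILOp t7 := by unfold IsNAFILOp ExistsUnique; decide

/-- For every n ≥ 5 there exists a NAFIL of order n. -/
theorem nafil_exists_of_five_le (n : ℕ) (hn : 5 ≤ n) :
    ∃ op : Fin n → Fin n → Fin n, IsNAFILOp op := by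
  by_cases h5 : n = 5
  · subst h5; exact ⟨t5, t5_nafil⟩
  by_cases h7 : n = 7
  · subst h7; exact ⟨t7, t7_nafil⟩
  by_cases hev : n % 2 = 0
  · -- even case
    obtain ⟨h, rfl⟩ : ∃ h, n = 2*h := ⟨n/2, by omega⟩
    have hh : 3 ≤ h := by omega
    haveI : NeZero (2*h) := ⟨by omega⟩
    have e : Fin (2*h) ≃ ZMod (2*h) :=
      Fintype.equivOfCardEq (by simp [ZMod.card])
    exact ⟨_, isNAFILOp_equiv e (even_nafil hh)⟩
  · -- odd case, n ≥ 9
    have h9 : 9 ≤ n := by omega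
    set h := (n-1)/2 with hh
    have hn1 : n - 1 = 2*h := by omega
    have hh4 : 4 ≤ h := by omega
    haveI : NeZero (2*h) := ⟨by omega⟩
    have e : Fin n ≃ Option (ZMod (2*h)) :=
      Fintype.equivOfCardEq (by simp [ZMod.card]; omega)
    by_cases hodd : h % 2 = 1
    · -- h odd, b = (h-1)/2
      have hb : 2*((h-1)/2)+1 = h := by omega
      have hb2 : 2 ≤ (h-1)/2 := by omega
      exact ⟨_, isNAFILOp_equiv e (odd2_nafil hb hb2)⟩
    · -- h even, b = h/2
      have hb : 2*(h/2) = h := by omega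
      have hb2 : 2 ≤ h/2 := by omega
      exact ⟨_, isNAFILOp_equiv e (odd0_nafil hb hb2)⟩
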